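/- arXiv:1206.3855 — 2 statements merged into one kernel-verified Lean document; each statement's English description precedes it below -/
import Mathlib

section
/- For c ∈ ℝ, I = (c, ∞), if f : I → ℝ satisfies the one-sided Lipschitz condition f(y') - f(y) ≤ κ(y' - y) for y ≤ y', and f(y) → +∞ as y → c⁺, then for any h > 0 with κh < 1, the map y ↦ y - h f(y) is a bijection from I onto ℝ. -/
theorem stmt_1 (c : ℝ) (f : ℝ → ℝ) (κ h : ℝ)
    (hcont : ContinuousOn f (Set.Ioi c))
    (hlip : ∀ y ∈ Set.Ioi c, ∀ y' ∈ Set.Ioi c, y ≤ y' → f y' - f y ≤ κ * (y' - y))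
    (hlim : Filter.Tendsto f (nhdsWithin c (Set.Ioi c)) Filter.atTop)
    (hh : 0 < h) (hκh : κ * h < 1) :
    Set.BijOn (fun y => y - h * f y) (Set.Ioi c) Set.univ := by
  set g : ℝ → ℝ := fun y => y - h * f y with hg
  have key : ∀ y ∈ Set.Ioi c, ∀ y' ∈ Set.Ioi c, y ≤ y' →
      (1 - κ * h) * (y' - y) ≤ g y' - g y := by
    intro y hy y' hy' hle
    have := hlip y hy y' hy' hle
    simp only [hg]
    nlinarith
  have hmono : StrictMonoOn g (Set.Ioi c) := by
    intro y hy y' hy' hlt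
    have := key y hy y' hy' hlt.le
    nlinarith
  have hgc : ContinuousOn g (Set.Ioi c) := by
    exact (continuousOn_id.sub (continuousOn_const.mul hcont))
  refine ⟨fun y _ => trivial, hmono.injOn, ?_⟩
  intro z _
  -- find a near c with g a < z
  have htendsto : Filter.Tendsto g (nhdsWithin c (Set.Ioi c)) Filter.atBot := by
    have h1 : Filter.Tendsto (fun y => h * f y) (nhdsWithin c (Set.Ioi c)) Filter.atTop :=
      Filter.Tendsto.const_mul_atTop hh hlim
    have h2 : Filter.Tendsto (fun y : ℝ => y) (nhdsWithin c (Set.Ioi c)) (nhds c) :=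
      Filter.Tendsto.mono_left Filter.tendsto_id nhdsWithin_le_nhds
    simpa [hg, sub_eq_add_neg] using Filter.Tendsto.add_atBot (h2) (Filter.tendsto_neg_atBot_iff.mpr h1)
  have hev : ∀ᶠ y in nhdsWithin c (Set.Ioi c), g y < z ∧ y ∈ Set.Ioi c := by
    filter_upwards [htendsto.eventually (Filter.eventually_lt_atBot z),
      self_mem_nhdsWithin] with y h1 h2
    exact ⟨h1, h2⟩
  obtain ⟨a, haz, hac⟩ := hev.exists
  -- find b large with g b > z
  set b : ℝ := a + max 1 ((z + 1 - g a) / (1 - κ * h)) with hb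
  have hpos : (0:ℝ) < 1 - κ * h := by linarith
  have hab : a ≤ b := by
    have h0 : (0:ℝ) < max 1 ((z + 1 - g a) / (1 - κ * h)) := lt_max_of_lt_left one_pos
    rw [hb]; linarith
  have hbc : b ∈ Set.Ioi c := lt_of_lt_of_le hac hab
  have hgb : z < g b := by
    have hk := key a hac b hbc hab
    have hba : (z + 1 - g a) / (1 - κ * h) ≤ b - a := by
      rw [hb]; simp
    have : z + 1 - g a ≤ (1 - κ * h) * (b - a) := by
      rw [div_le_iff₀ hpos] at hba
      linarith [hba]
    linarith
  have hsub : Set.Icc a b ⊆ Set.Ioi c := fun x hx => lt_of_lt_of_le hac hx.1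
  have := intermediate_value_Icc hab (hgc.mono hsub)
  have hz : z ∈ Set.Icc (g a) (g b) := ⟨haz.le, hgb.le⟩
  obtain ⟨y, hy, hgy⟩ := this hz
  exact ⟨y, hsub hy, hgy⟩
end

section
/- Discrete Gronwall-type estimate: let κ ≥ 0, T > 0, n > 2κT, βₗ ≤ κ, Πₖ = ∏_{l=1}^k (1 − βₗ T/n), and suppose reals (eₖ)_{k=0}^{n} with e₀ = 0 satisfy (1 − β_{k+1} T/n)·e_{k+1} = eₖ + Aₖ + Bₖ for k = 0,…,n−1, where Aₖ, Bₖ ∈ ℝ. Set M̃ₖ = ∑_{l=0}^{k−1} (1 − κT/n)^{l} Bₗ and assume |M̃ₗ| ≤ M* for all l ≤ n. Then for every k ≤ n, |eₖ| ≤ e^{2κT}·(∑_{l=0}^{k−1} |Aₗ| + 2 M*). -/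
theorem stmt_13 (κ T Mstar : ℝ) (n : ℕ) (β e A B : ℕ → ℝ)
    (hκ : 0 ≤ κ) (hT : 0 < T) (hn : 2 * κ * T < n)
    (hβ : ∀ l, β l ≤ κ) (he0 : e 0 = 0)
    (hrec : ∀ k < n, (1 - β (k + 1) * (T / n)) * e (k + 1) = e k + A k + B k)
    (hM : ∀ l ≤ n, |∑ i ∈ Finset.range l, (1 - κ * T / n) ^ i * B i| ≤ Mstar) :
    ∀ k ≤ n, |e k| ≤ Real.exp (2 * κ * T) * (∑ l ∈ Finset.range k, |A l| + 2 * Mstar) := by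
  have hn0 : (0:ℝ) < n := lt_of_le_of_lt (by positivity) hn
  have hnne : (n:ℝ) ≠ 0 := ne_of_gt hn0
  set x : ℝ := κ * T / n with hxdef
  have hx0 : 0 ≤ x := by positivity
  have hx2 : x ≤ 1/2 := by
    rw [hxdef, div_le_iff₀ hn0]; nlinarith
  set ρ : ℝ := 1 - x with hρdef
  have hρ0 : 0 < ρ := by rw [hρdef]; linarith
  have hρ1 : ρ ≤ 1 := by rw [hρdef]; linarith
  set E : ℝ := Real.exp (2*κ*T) with hEdef
  have hE0 : 0 < E := Real.exp_pos _
  have hxn : x * n = κ * T := div_mul_cancel₀ _ hnne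
  have hMstar : 0 ≤ Mstar := by
    have := hM 0 (Nat.zero_le n); simpa using this
  -- exp(-(2x)) ≤ ρ
  have hexpρ : Real.exp (-(2*x)) ≤ ρ := by
    have hv : (1:ℝ) + 2*x ≤ Real.exp (2*x) := by linarith [Real.add_one_le_exp (2*x)]
    have h12 : (0:ℝ) < 1 + 2*x := by linarith
    have h1 : Real.exp (-(2*x)) ≤ (1 + 2*x)⁻¹ := by
      rw [Real.exp_neg]
      exact inv_anti₀ h12 hv
    have h2 : (1 + 2*x)⁻¹ ≤ ρ := by
      rw [inv_eq_one_div, div_le_iff₀ h12]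
      nlinarith
    linarith
  have hEρ : 1 ≤ E * ρ^n := by
    have h2 : Real.exp (-(2*x)) ^ n ≤ ρ ^ n :=
      pow_le_pow_left₀ (Real.exp_pos _).le hexpρ n
    have h3 : E * Real.exp (-(2*x)) ^ n = 1 := by
      rw [← Real.exp_nat_mul, hEdef, ← Real.exp_add]
      rw [show 2*κ*T + (n:ℝ) * -(2*x) = 0 by linear_combination (-2:ℝ) * hxn]
      exact Real.exp_zero
    calc (1:ℝ) = E * Real.exp (-(2*x)) ^ n := h3.symm
      _ ≤ E * ρ^n := by
          exact mul_le_mul_of_nonneg_left h2 hE0.le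
  set f : ℕ → ℝ := fun i => 1 - β i * (T/n) with hfdef
  have hfρ : ∀ i, ρ ≤ f i := by
    intro i
    have h1 : β i * (T/n) ≤ κ * (T/n) :=
      mul_le_mul_of_nonneg_right (hβ i) (by positivity)
    have h2 : κ * (T/n) = x := by rw [hxdef, mul_div_assoc]
    simp only [hfdef, hρdef]
    linarith [h1, h2 ▸ h1]
  set P : ℕ → ℝ := fun k => ∏ i ∈ Finset.range k, f (i+1) with hPdef
  have hPk : ∀ k, ρ^k ≤ P k := by
    intro k
    calc ρ^k = ∏ _i ∈ Finset.range k, ρ := by simp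
      _ ≤ P k := Finset.prod_le_prod (fun i _ => hρ0.le) (fun i _ => hfρ (i+1))
  have hPpos : ∀ k, 0 < P k := fun k => lt_of_lt_of_le (pow_pos hρ0 k) (hPk k)
  -- ratio bound
  have hPratio : ∀ l k, l ≤ k → k ≤ n → P l ≤ E * P k := by
    intro l k hlk hkn
    have hsplit : P k = P l * ∏ i ∈ Finset.range (k-l), f (l+i+1) := by
      rw [hPdef]
      simp only
      rw [show k = l + (k-l) from (Nat.add_sub_cancel' hlk).symm, Finset.prod_range_add]
      simp [Nat.add_sub_cancel' hlk]
    have h1 : ρ^(k-l) ≤ ∏ i ∈ Finset.range (k-l), f (l+i+1) := by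
      calc ρ^(k-l) = ∏ _i ∈ Finset.range (k-l), ρ := by simp
        _ ≤ _ := Finset.prod_le_prod (fun i _ => hρ0.le) (fun i _ => hfρ (l+i+1))
    have h2 : ρ^n ≤ ρ^(k-l) :=
      pow_le_pow_of_le_one hρ0.le hρ1 (le_trans (Nat.sub_le k l) hkn)
    have h3 : P l * ρ^n ≤ P k := by
      calc P l * ρ^n ≤ P l * ρ^(k-l) :=
            mul_le_mul_of_nonneg_left h2 (hPpos l).le
        _ ≤ P l * ∏ i ∈ Finset.range (k-l), f (l+i+1) :=
            mul_le_mul_of_nonneg_left h1 (hPpos l).le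
        _ = P k := hsplit.symm
    calc P l = P l * 1 := (mul_one _).symm
      _ ≤ P l * (E * ρ^n) := mul_le_mul_of_nonneg_left hEρ (hPpos l).le
      _ = E * (P l * ρ^n) := by ring
      _ ≤ E * P k := mul_le_mul_of_nonneg_left h3 hE0.le
  set Q : ℕ → ℝ := fun k => P k / ρ^k with hQdef
  have hQstep : ∀ k, Q k ≤ Q (k+1) := by
    intro k
    rw [hQdef]
    simp only
    rw [div_le_div_iff₀ (pow_pos hρ0 k) (pow_pos hρ0 (k+1))]
    have hP1 : P (k+1) = P k * f (k+1) := Finset.prod_range_succ _ k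
    rw [hP1, pow_succ]
    have := hfρ (k+1)
    have hpk : (0:ℝ) < ρ^k := pow_pos hρ0 k
    nlinarith [hPpos k, mul_le_mul_of_nonneg_left this (hPpos k).le]
  have hQmono : Monotone Q := monotone_nat_of_le_succ hQstep
  have hQ1 : ∀ k, 1 ≤ Q k := by
    intro k
    have : Q 0 = 1 := by simp [hQdef, hPdef]
    calc (1:ℝ) = Q 0 := this.symm
      _ ≤ Q k := hQmono (Nat.zero_le k)
  have hQtop : ∀ m, m + 1 ≤ n → Q m ≤ E * P (m+1) := by
    intro m hm
    rw [hQdef]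
    simp only
    rw [div_le_iff₀ (pow_pos hρ0 m)]
    have hP1 : P (m+1) = P m * f (m+1) := Finset.prod_range_succ _ m
    have h1 : P m * ρ ≤ P (m+1) := by
      rw [hP1]; exact mul_le_mul_of_nonneg_left (hfρ (m+1)) (hPpos m).le
    have h2 : ρ^n ≤ ρ^(m+1) := pow_le_pow_of_le_one hρ0.le hρ1 hm
    have h3 : P m * (E * ρ^(m+1)) ≥ P m * 1 := by
      apply mul_le_mul_of_nonneg_left _ (hPpos m).le
      calc (1:ℝ) ≤ E * ρ^n := hEρ
        _ ≤ E * ρ^(m+1) := mul_le_mul_of_nonneg_left h2 hE0.le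
    calc P m ≤ P m * (E * ρ^(m+1)) := by linarith [h3]
      _ = E * (P m * ρ) * ρ^m := by ring
      _ ≤ E * P (m+1) * ρ^m := by
          apply mul_le_mul_of_nonneg_right _ (pow_pos hρ0 m).le
          exact mul_le_mul_of_nonneg_left h1 hE0.le
  -- telescoping identity
  have hkey : ∀ k, k ≤ n → P k * e k = ∑ i ∈ Finset.range k, P i * (A i + B i) := by
    intro k
    induction k with
    | zero => intro _; simp [hPdef, he0]
    | succ m ih =>
        intro hm
        have hmn : m < n := hm
        have hrecm := hrec m hmn
        have hP1 : P (m+1) = P m * f (m+1) := Finset.prod_range_succ _ m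
        rw [Finset.sum_range_succ, ← ih (le_of_lt hmn), hP1]
        have : f (m+1) * e (m+1) = e m + A m + B m := hrecm
        calc P m * f (m+1) * e (m+1) = P m * (f (m+1) * e (m+1)) := by ring
          _ = P m * (e m + A m + B m) := by rw [this]
          _ = P m * e m + P m * (A m + B m) := by ring
  -- main bound
  intro k hk
  cases k with
  | zero =>
    simp only [he0, abs_zero, Finset.range_zero, Finset.sum_empty, zero_add]
    positivity
  | succ m =>
    set g : ℕ → ℝ := fun i => ρ^i * B i with hgdef
    have hMg : ∀ l ≤ n, |∑ i ∈ Finset.range l, g i| ≤ Mstar := hM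
    -- sum of B part via Abel
    have habel : ∑ i ∈ Finset.range (m+1), P i * B i =
        Q m * (∑ i ∈ Finset.range (m+1), g i) -
          ∑ i ∈ Finset.range m, (Q (i+1) - Q i) * ∑ j ∈ Finset.range (i+1), g j := by
      have h1 : ∀ i, P i * B i = Q i * g i := by
        intro i
        rw [hQdef, hgdef]
        simp only
        field_simp
      calc ∑ i ∈ Finset.range (m+1), P i * B i
          = ∑ i ∈ Finset.range (m+1), Q i • g i := by
            simp only [smul_eq_mul]; exact Finset.sum_congr rfl fun i _ => h1 i
        _ = Q (m+1-1) • ∑ i ∈ Finset.range (m+1), g i -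
            ∑ i ∈ Finset.range (m+1-1), (Q (i+1) - Q i) • ∑ j ∈ Finset.range (i+1), g j :=
            Finset.sum_range_by_parts Q g (m+1)
        _ = _ := by simp [smul_eq_mul]
    have hBbound : |∑ i ∈ Finset.range (m+1), P i * B i| ≤ 2 * (E * P (m+1)) * Mstar := by
      rw [habel]
      have h1 : |Q m * (∑ i ∈ Finset.range (m+1), g i)| ≤ Q m * Mstar := by
        rw [abs_mul, abs_of_nonneg (le_trans zero_le_one (hQ1 m))]
        exact mul_le_mul_of_nonneg_left (hMg (m+1) hk) (le_trans zero_le_one (hQ1 m))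
      have h2 : |∑ i ∈ Finset.range m, (Q (i+1) - Q i) * ∑ j ∈ Finset.range (i+1), g j|
          ≤ (Q m - Q 0) * Mstar := by
        calc |∑ i ∈ Finset.range m, (Q (i+1) - Q i) * ∑ j ∈ Finset.range (i+1), g j|
            ≤ ∑ i ∈ Finset.range m, |(Q (i+1) - Q i) * ∑ j ∈ Finset.range (i+1), g j| :=
              Finset.abs_sum_le_sum_abs _ _
          _ ≤ ∑ i ∈ Finset.range m, (Q (i+1) - Q i) * Mstar := by
              apply Finset.sum_le_sum
              intro i hi
              rw [abs_mul, abs_of_nonneg (sub_nonneg.mpr (hQstep i))]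
              apply mul_le_mul_of_nonneg_left _ (sub_nonneg.mpr (hQstep i))
              apply hMg (i+1)
              have : i < m := Finset.mem_range.mp hi
              omega
          _ = (Q m - Q 0) * Mstar := by
              rw [← Finset.sum_mul, Finset.sum_range_sub Q m]
        
      have hQ0 : Q 0 = 1 := by simp [hQdef, hPdef]
      have h3 : Q m ≤ E * P (m+1) := hQtop m hk
      calc |Q m * (∑ i ∈ Finset.range (m+1), g i) -
            ∑ i ∈ Finset.range m, (Q (i+1) - Q i) * ∑ j ∈ Finset.range (i+1), g j|
          ≤ |Q m * (∑ i ∈ Finset.range (m+1), g i)| +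
            |∑ i ∈ Finset.range m, (Q (i+1) - Q i) * ∑ j ∈ Finset.range (i+1), g j| :=
            abs_sub _ _
        _ ≤ Q m * Mstar + (Q m - Q 0) * Mstar := add_le_add h1 h2
        _ ≤ 2 * (E * P (m+1)) * Mstar := by
            rw [hQ0]
            have hq1 : (1:ℝ) ≤ Q m := hQ1 m
            nlinarith
    have hAbound : |∑ i ∈ Finset.range (m+1), P i * A i| ≤
        E * P (m+1) * ∑ l ∈ Finset.range (m+1), |A l| := by
      calc |∑ i ∈ Finset.range (m+1), P i * A i|
          ≤ ∑ i ∈ Finset.range (m+1), |P i * A i| := Finset.abs_sum_le_sum_abs _ _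
        _ ≤ ∑ i ∈ Finset.range (m+1), E * P (m+1) * |A i| := by
            apply Finset.sum_le_sum
            intro i hi
            rw [abs_mul, abs_of_nonneg (hPpos i).le]
            exact mul_le_mul_of_nonneg_right
              (hPratio i (m+1) (le_of_lt (Finset.mem_range.mp hi)) hk) (abs_nonneg _)
        _ = E * P (m+1) * ∑ l ∈ Finset.range (m+1), |A l| := by
            rw [Finset.mul_sum]
    have hsum : P (m+1) * e (m+1) =
        (∑ i ∈ Finset.range (m+1), P i * A i) + ∑ i ∈ Finset.range (m+1), P i * B i := by
      rw [hkey (m+1) hk, ← Finset.sum_add_distrib]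
      exact Finset.sum_congr rfl fun i _ => by ring
    have hfinal : P (m+1) * |e (m+1)| ≤
        P (m+1) * (E * (∑ l ∈ Finset.range (m+1), |A l| + 2 * Mstar)) := by
      have h1 : P (m+1) * |e (m+1)| = |P (m+1) * e (m+1)| := by
        rw [abs_mul, abs_of_nonneg (hPpos (m+1)).le]
      rw [h1, hsum]
      calc |(∑ i ∈ Finset.range (m+1), P i * A i) + ∑ i ∈ Finset.range (m+1), P i * B i|
          ≤ |∑ i ∈ Finset.range (m+1), P i * A i| + |∑ i ∈ Finset.range (m+1), P i * B i| :=
            abs_add_le _ _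
        _ ≤ E * P (m+1) * ∑ l ∈ Finset.range (m+1), |A l| + 2 * (E * P (m+1)) * Mstar :=
            add_le_add hAbound hBbound
        _ = P (m+1) * (E * (∑ l ∈ Finset.range (m+1), |A l| + 2 * Mstar)) := by ring
    exact le_of_mul_le_mul_left hfinal (hPpos (m+1))
end
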